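/- Let H be a ℚ-vector-space basis of ℝ containing π, and for x ∈ ℝ let x_π denote the π-coordinate of x with respect to H. Let A = {x ∈ ℝ : ⌊x_π⌋ is even}. Then A + π = ℝ \ A, i.e., {x + π : x ∈ A} equals the complement of A. -/

import Mathlib

open Real

theorem stmt_8 {ι : Type*} (B : Module.Basis ι ℚ ℝ) (i₀ : ι) (hB : B i₀ = π) :
    (fun x => x + π) '' {x : ℝ | Even ⌊B.repr x i₀⌋} = {x : ℝ | Even ⌊B.repr x i₀⌋}ᶜ := by
  have key : ∀ x : ℝ, B.repr (x + π) i₀ = B.repr x i₀ + 1 := by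
    intro x
    rw [map_add, ← hB, B.repr_self]
    simp
  ext x
  simp only [Set.mem_image, Set.mem_setOf_eq, Set.mem_compl_iff]
  constructor
  · rintro ⟨y, hy, rfl⟩
    rw [key, Int.floor_add_one]
    simpa [Int.even_add_one] using hy
  · intro hx
    refine ⟨x - π, ?_, by ring⟩
    have : B.repr x i₀ = B.repr (x - π) i₀ + 1 := by
      rw [← key]; ring_nf
    rw [this, Int.floor_add_one, Int.even_add_one, not_not] at hx
    exact hx
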